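/- Let (p_n)_{n≥1} be a strictly increasing sequence of odd primes and let G be the additive submonoid of ℚ≥0 generated by {1/(2^n p_n) : n ∈ ℕ} (Grams' monoid). Then the set of atoms of G is exactly {1/(2^n p_n) : n ∈ ℕ}, and the element 1 ∈ G has factorizations of arbitrarily large length and is divisible in G by infinitely many pairwise distinct atoms; consequently G is neither a BFM nor an IDF monoid. -/

import Mathlib

/-- In an additive submonoid `M` of `ℚ` (a reduced monoid), an atom is a nonzero element of
`M` that is not the sum of two nonzero elements of `M`. -/
def IsAtomIn (M : AddSubmonoid ℚ) (a : ℚ) : Prop :=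
  a ∈ M ∧ a ≠ 0 ∧ ∀ b c : ℚ, b ∈ M → c ∈ M → a = b + c → b = 0 ∨ c = 0

/-- `a` divides `b` in the additive submonoid `M` of `ℚ` if `b = a + c` for some `c ∈ M`. -/
def DividesIn (M : AddSubmonoid ℚ) (a b : ℚ) : Prop :=
  ∃ c ∈ M, b = a + c

/-- The factorizations of `q` in an additive submonoid `M` of `ℚ`: multisets of atoms of
`M` whose sum is `q`. -/
def FactorizationsIn (M : AddSubmonoid ℚ) (q : ℚ) : Set (Multiset ℚ) :=
  {s | (∀ x ∈ s, IsAtomIn M x) ∧ s.sum = q}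

/-- An additive submonoid `M` of `ℚ` is a BFM if every element of `M` has a nonempty finite
set of factorization lengths. -/
def IsBFMIn (M : AddSubmonoid ℚ) : Prop :=
  ∀ q ∈ M, (Multiset.card '' FactorizationsIn M q).Nonempty ∧
    (Multiset.card '' FactorizationsIn M q).Finite

/-- An additive submonoid `M` of `ℚ` is an IDF monoid if every element of `M` is divisible
in `M` by only finitely many atoms (the monoid being reduced, associates coincide). -/
def IsIDFIn (M : AddSubmonoid ℚ) : Prop :=
  ∀ q ∈ M, {a : ℚ | IsAtomIn M a ∧ DividesIn M a q}.Finite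



namespace GramsAux

noncomputable def g (p : ℕ → ℕ) (n : ℕ) : ℚ := 1 / (2 ^ n * (p n : ℚ))

variable {p : ℕ → ℕ}

lemma g_pos (hprime : ∀ n : ℕ, 1 ≤ n → (p n).Prime) {n : ℕ} (hn : 1 ≤ n) : 0 < g p n := by
  have h : (0 : ℚ) < p n := by exact_mod_cast (hprime n hn).pos
  unfold g
  positivity

lemma mem_closure_iff (q : ℚ) :
    q ∈ AddSubmonoid.closure {q : ℚ | ∃ n : ℕ, 1 ≤ n ∧ q = 1 / (2 ^ n * (p n : ℚ))} ↔
      ∃ m : Multiset ℕ, (∀ k ∈ m, 1 ≤ k) ∧ (m.map (g p)).sum = q := by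
  constructor
  · intro hq
    induction hq using AddSubmonoid.closure_induction with
    | mem x hx =>
      obtain ⟨n, hn, rfl⟩ := hx
      exact ⟨{n}, by simpa using hn, by simp [g]⟩
    | zero => exact ⟨0, by simp, by simp⟩
    | add x y hx hy ihx ihy =>
      obtain ⟨m1, h1, hs1⟩ := ihx
      obtain ⟨m2, h2, hs2⟩ := ihy
      refine ⟨m1 + m2, fun k hk => ?_, by simp [hs1, hs2]⟩
      rcases Multiset.mem_add.1 hk with h | h
      exacts [h1 k h, h2 k h]
  · rintro ⟨m, hm, rfl⟩
    refine AddSubmonoid.multiset_sum_mem _ _ fun x hx => ?_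
    obtain ⟨k, hk, rfl⟩ := Multiset.mem_map.1 hx
    exact AddSubmonoid.subset_closure ⟨k, hm k hk, rfl⟩


lemma key (hprime : ∀ n : ℕ, 1 ≤ n → (p n).Prime)
    (hodd : ∀ n : ℕ, 1 ≤ n → p n ≠ 2)
    (hmono : ∀ m n : ℕ, 1 ≤ m → m < n → p m < p n)
    {n : ℕ} (hn : 1 ≤ n) (m : Multiset ℕ)
    (hm : ∀ k ∈ m, 1 ≤ k) (hsum : (m.map (g p)).sum = g p n) : m = {n} := by
  have pne : ∀ {j : ℕ}, 1 ≤ j → j ≠ n → p j ≠ p n := by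
    intro j hj hjn
    rcases lt_or_gt_of_ne hjn with h | h
    · exact (hmono j n hj h).ne
    · exact (hmono n j hn h).ne'
  set s : Finset ℕ := m.toFinset with hs
  have hs1 : ∀ k ∈ s, 1 ≤ k := fun k hk => hm k (Multiset.mem_toFinset.1 hk)
  have hsum' : ∑ k ∈ s, (m.count k : ℚ) * g p k = g p n := by
    rw [← hsum, Finset.sum_multiset_map_count]
    simp [nsmul_eq_mul]
    rfl
  set T : Finset ℕ := insert n s with hT
  set N : ℕ := T.sup id with hN
  set A : ℕ → ℕ := fun k => 2 ^ (N - k) * ∏ j ∈ T.erase k, p j with hA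
  set D : ℕ := 2 ^ N * ∏ j ∈ T, p j with hD
  have hcast : ∀ k ∈ T, g p k * (D : ℚ) = (A k : ℚ) := by
    intro k hk
    have hkN : k ≤ N := Finset.le_sup (f := id) hk
    have hDnat : D = (2 ^ k * p k) * A k := by
      rw [hD, hA]
      rw [← Finset.mul_prod_erase T p hk, ← pow_sub_mul_pow 2 hkN]
      ring
    have hpk : (2 ^ k * (p k : ℚ)) ≠ 0 := by
      have : p k ≠ 0 := by
        rcases Finset.mem_insert.1 hk with h | h
        · rw [h]; exact (hprime n hn).pos.ne'
        · exact (hprime k (hs1 k h)).pos.ne'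
      positivity
    rw [hDnat]
    push_cast
    rw [g, one_div, inv_mul_cancel_left₀ hpk]
  have hnmem : n ∈ T := Finset.mem_insert_self n s
  have hnat : ∑ k ∈ s, m.count k * A k = A n := by
    have hq : ((∑ k ∈ s, m.count k * A k : ℕ) : ℚ) = ((A n : ℕ) : ℚ) := by
      push_cast
      calc ∑ k ∈ s, (m.count k : ℚ) * (A k : ℚ)
          = ∑ k ∈ s, (m.count k : ℚ) * (g p k * D) := by
            refine Finset.sum_congr rfl fun k hk => ?_
            rw [hcast k (Finset.mem_insert_of_mem hk)]
        _ = (∑ k ∈ s, (m.count k : ℚ) * g p k) * D := by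
            rw [Finset.sum_mul]; exact Finset.sum_congr rfl fun k _ => by ring
        _ = g p n * D := by rw [hsum']
        _ = A n := hcast n hnmem
    exact_mod_cast hq
  -- now reduce mod p n
  haveI : Fact (p n).Prime := ⟨hprime n hn⟩
  have hAn_ne : ((A n : ℕ) : ZMod (p n)) ≠ 0 := by
    intro h0
    rw [ZMod.natCast_eq_zero_iff] at h0
    have hdvd := h0
    rcases (hprime n hn).dvd_mul.1 hdvd with h | h
    · have := (hprime n hn).dvd_of_dvd_pow h
      exact hodd n hn ((Nat.prime_dvd_prime_iff_eq (hprime n hn) Nat.prime_two).1 this)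
    · obtain ⟨j, hj, hdj⟩ := (Nat.Prime.prime (hprime n hn)).exists_mem_finset_dvd h
      have hjne : j ≠ n := (Finset.mem_erase.1 hj).1
      have hjs : j ∈ s := by
        rcases Finset.mem_insert.1 (Finset.mem_erase.1 hj).2 with h' | h'
        · exact absurd h' hjne
        · exact h'
      have hj1 : 1 ≤ j := hs1 j hjs
      have : p n = p j := (Nat.prime_dvd_prime_iff_eq (hprime n hn) (hprime j hj1)).1 hdj
      exact pne hj1 hjne this.symm
  have hAk_zero : ∀ k ∈ s, k ≠ n → ((A k : ℕ) : ZMod (p n)) = 0 := by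
    intro k hk hkn
    rw [ZMod.natCast_eq_zero_iff]
    have hnk : n ∈ T.erase k := Finset.mem_erase.2 ⟨fun h => hkn h.symm, hnmem⟩
    exact Dvd.dvd.mul_left (Finset.dvd_prod_of_mem p hnk) _
  have hns : n ∈ s := by
    by_contra hns
    have hz := congrArg (Nat.cast : ℕ → ZMod (p n)) hnat
    push_cast at hz
    rw [Finset.sum_eq_zero (fun k hk => by
      rw [hAk_zero k hk (fun h => hns (h ▸ hk))]; ring)] at hz
    exact hAn_ne hz.symm
  -- bound count n ≤ 1
  have hgpos : ∀ k ∈ s, (0:ℚ) ≤ (m.count k : ℚ) * g p k := fun k hk =>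
    mul_nonneg (by positivity) (g_pos hprime (hs1 k hk)).le
  have hle : (m.count n : ℚ) * g p n ≤ g p n := by
    have h3 := Finset.single_le_sum (f := fun k => (m.count k : ℚ) * g p k) hgpos hns
    rw [hsum'] at h3
    exact h3
  have hcle : (m.count n : ℚ) ≤ 1 :=
    (mul_le_iff_le_one_left (g_pos hprime hn)).1 hle
  have hc1 : m.count n = 1 :=
    le_antisymm (by exact_mod_cast hcle) (Multiset.one_le_count_iff_mem.2 (Multiset.mem_toFinset.1 hns))
  -- rest of sum is zero
  have herase : ∑ k ∈ s.erase n, (m.count k : ℚ) * g p k = 0 := by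
    have h2 := Finset.add_sum_erase s (fun k => (m.count k : ℚ) * g p k) hns
    simp only [hc1, Nat.cast_one, one_mul, hsum'] at h2
    linarith
  have hempty : s.erase n = ∅ := by
    by_contra h
    obtain ⟨k, hk⟩ := Finset.nonempty_iff_ne_empty.2 h
    have hks : k ∈ s := Finset.mem_of_mem_erase hk
    have := (Finset.sum_eq_zero_iff_of_nonneg (fun k hk => hgpos k (Finset.mem_of_mem_erase hk))).1 herase k hk
    have hcp : (0:ℚ) < (m.count k : ℚ) :=
      by exact_mod_cast Multiset.one_le_count_iff_mem.2 (Multiset.mem_toFinset.1 hks)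
    have := mul_pos hcp (g_pos hprime (hs1 k hks))
    linarith [((Finset.sum_eq_zero_iff_of_nonneg (fun j hj => hgpos j (Finset.mem_of_mem_erase hj))).1 herase k hk)]
  have hsub : ∀ b ∈ m, b = n := by
    intro b hb
    have : b ∈ s := Multiset.mem_toFinset.2 hb
    by_contra hbn
    exact absurd (Finset.mem_erase.2 ⟨hbn, this⟩) (by simp [hempty])
  have hrepl : m = Multiset.replicate (Multiset.card m) n := Multiset.eq_replicate_card.2 hsub
  have hcard : Multiset.card m = 1 := by
    have := hc1
    rw [hrepl] at this
    simpa [Multiset.count_replicate] using this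
  rw [hrepl, hcard]
  rfl



end GramsAux

open GramsAux in
/-- Let `(p_n)_{n ≥ 1}` be a strictly increasing sequence of odd primes and
let `G` be the additive submonoid of `ℚ≥0` generated by `{1/(2^n p_n) : n ≥ 1}` (Grams'
monoid). Then the atoms of `G` are exactly the generators `1/(2^n p_n)`, the element
`1 ∈ G` has factorizations of arbitrarily large length and is divisible in `G` by
infinitely many distinct atoms; consequently `G` is neither a BFM nor an IDF monoid. -/
theorem grams_monoid_not_bfm_not_idf (p : ℕ → ℕ)
    (hprime : ∀ n : ℕ, 1 ≤ n → (p n).Prime)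
    (hodd : ∀ n : ℕ, 1 ≤ n → p n ≠ 2)
    (hmono : ∀ m n : ℕ, 1 ≤ m → m < n → p m < p n)
    (G : AddSubmonoid ℚ)
    (hG : G = AddSubmonoid.closure {q : ℚ | ∃ n : ℕ, 1 ≤ n ∧ q = 1 / (2 ^ n * (p n : ℚ))}) :
    (∀ q : ℚ, IsAtomIn G q ↔ ∃ n : ℕ, 1 ≤ n ∧ q = 1 / (2 ^ n * (p n : ℚ))) ∧
    (1 : ℚ) ∈ G ∧
    (∀ N : ℕ, ∃ s ∈ FactorizationsIn G 1, N ≤ Multiset.card s) ∧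
    {a : ℚ | IsAtomIn G a ∧ DividesIn G a 1}.Infinite ∧
    ¬ IsBFMIn G ∧ ¬ IsIDFIn G := by
  subst hG
  have gdef : ∀ n : ℕ, g p n = 1 / (2 ^ n * (p n : ℚ)) := fun n => rfl
  set G := AddSubmonoid.closure {q : ℚ | ∃ n : ℕ, 1 ≤ n ∧ q = 1 / (2 ^ n * (p n : ℚ))} with hGdef
  -- atom characterization
  have hatom : ∀ q : ℚ, IsAtomIn G q ↔ ∃ n : ℕ, 1 ≤ n ∧ q = 1 / (2 ^ n * (p n : ℚ)) := by
    intro q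
    constructor
    · rintro ⟨hqG, hq0, hsplit⟩
      obtain ⟨m, hm, hsum⟩ := (GramsAux.mem_closure_iff (p := p) q).1 hqG
      have hm0 : m ≠ 0 := by
        rintro rfl
        simp at hsum
        exact hq0 hsum.symm
      obtain ⟨k, hk⟩ := Multiset.exists_mem_of_ne_zero hm0
      have hrest : ((m.erase k).map (g p)).sum ∈ G :=
        (GramsAux.mem_closure_iff _).2 ⟨m.erase k, fun j hj => hm j (Multiset.mem_of_mem_erase hj), rfl⟩
      have hgk : g p k ∈ G := AddSubmonoid.subset_closure ⟨k, hm k hk, rfl⟩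
      have hq : q = g p k + ((m.erase k).map (g p)).sum := by
        conv_lhs => rw [← hsum, ← Multiset.cons_erase hk]
        rw [Multiset.map_cons, Multiset.sum_cons]
      rcases hsplit _ _ hgk hrest hq with h | h
      · exact absurd h (g_pos hprime (hm k hk)).ne'
      · exact ⟨k, hm k hk, by rw [hq, h, add_zero, gdef]⟩
    · rintro ⟨n, hn, rfl⟩
      rw [← gdef]
      refine ⟨AddSubmonoid.subset_closure ⟨n, hn, rfl⟩, (g_pos hprime hn).ne', ?_⟩
      intro b c hb hc habc
      obtain ⟨mb, hmb, hsb⟩ := (GramsAux.mem_closure_iff (p := p) b).1 hb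
      obtain ⟨mc, hmc, hsc⟩ := (GramsAux.mem_closure_iff (p := p) c).1 hc
      have hsum : ((mb + mc).map (g p)).sum = g p n := by
        rw [Multiset.map_add, Multiset.sum_add, hsb, hsc, ← habc]
      have hkey := key hprime hodd hmono hn (mb + mc)
        (fun k hk => by rcases Multiset.mem_add.1 hk with h | h; exacts [hmb k h, hmc k h]) hsum
      have hcard : Multiset.card mb + Multiset.card mc = 1 := by
        have := congrArg Multiset.card hkey
        simpa using this
      have h0 : Multiset.card mb = 0 ∨ Multiset.card mc = 0 := by omega
      rcases h0 with h | h
      · left; rw [← hsb, Multiset.card_eq_zero.1 h]; simp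
      · right; rw [← hsc, Multiset.card_eq_zero.1 h]; simp
  -- the basic replicate factorizations of 1
  have hone : ∀ n : ℕ, 1 ≤ n → ((Multiset.replicate (2 ^ n * p n) n).map (g p)).sum = 1 := by
    intro n hn
    rw [Multiset.map_replicate, Multiset.sum_replicate, nsmul_eq_mul]
    have hppos : (0 : ℚ) < p n := by exact_mod_cast (hprime n hn).pos
    have hne : (2 ^ n * (p n : ℚ)) ≠ 0 := by positivity
    push_cast
    rw [gdef, one_div, mul_inv_cancel₀ hne]
  have h1G : (1 : ℚ) ∈ G := by
    refine (GramsAux.mem_closure_iff 1).2 ⟨Multiset.replicate (2 ^ 1 * p 1) 1, fun k hk => ?_, hone 1 le_rfl⟩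
    rw [(Multiset.eq_of_mem_replicate hk : k = 1)]
  -- arbitrarily long factorizations of 1
  have harb : ∀ N : ℕ, ∃ s ∈ FactorizationsIn G 1, N ≤ Multiset.card s := by
    intro N
    set n := max 1 N with hn
    have hn1 : 1 ≤ n := le_max_left _ _
    refine ⟨Multiset.replicate (2 ^ n * p n) (g p n), ⟨fun x hx => ?_, ?_⟩, ?_⟩
    · rw [Multiset.eq_of_mem_replicate hx]
      exact (hatom _).2 ⟨n, hn1, gdef n⟩
    · rw [← Multiset.map_replicate (g p)]
      exact hone n hn1
    · rw [Multiset.card_replicate]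
      calc N ≤ n := le_max_right _ _
        _ ≤ 2 ^ n := (Nat.lt_two_pow_self).le
        _ ≤ 2 ^ n * p n := Nat.le_mul_of_pos_right _ (hprime n hn1).pos
  -- each generator divides 1
  have hdiv : ∀ n : ℕ, 1 ≤ n → DividesIn G (g p n) 1 := by
    intro n hn
    have hpos : 0 < 2 ^ n * p n := Nat.mul_pos (Nat.two_pow_pos n) (hprime n hn).pos
    refine ⟨((Multiset.replicate (2 ^ n * p n - 1) n).map (g p)).sum,
      (GramsAux.mem_closure_iff _).2 ⟨_, fun k hk => by rw [Multiset.eq_of_mem_replicate hk]; exact hn, rfl⟩, ?_⟩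
    have hsplit : 2 ^ n * p n = 1 + (2 ^ n * p n - 1) := by omega
    have hexp : ((Multiset.replicate (2 ^ n * p n) n).map (g p)).sum
        = g p n + ((Multiset.replicate (2 ^ n * p n - 1) n).map (g p)).sum := by
      conv_lhs => rw [hsplit]
      rw [Multiset.replicate_add, Multiset.map_add, Multiset.sum_add, Multiset.replicate_one,
        Multiset.map_singleton, Multiset.sum_singleton]
    rw [← hone n hn, hexp]
  -- infinitude of atoms dividing 1
  have hlt : ∀ a b : ℕ, 1 ≤ a → a < b → g p b < g p a := by
    intro a b ha hab
    have h2 : (2 : ℚ) ^ a < 2 ^ b := by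
      exact_mod_cast Nat.pow_lt_pow_right (by norm_num) hab
    have hp : (p a : ℚ) < p b := by exact_mod_cast hmono a b ha hab
    have hpa : (0 : ℚ) < 2 ^ a * (p a : ℚ) := by
      have : (0 : ℚ) < p a := by exact_mod_cast (hprime a ha).pos
      positivity
    rw [gdef, gdef]
    apply one_div_lt_one_div_of_lt hpa
    have hpa0 : (0 : ℚ) ≤ (p a : ℚ) := by positivity
    exact mul_lt_mul'' h2 hp (by positivity) hpa0
  have hinf : {a : ℚ | IsAtomIn G a ∧ DividesIn G a 1}.Infinite := by
    have hinj : Function.Injective (fun k : ℕ => g p (k + 1)) := by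
      intro a b hab
      by_contra hne
      rcases lt_or_gt_of_ne hne with h | h
      · exact absurd hab (hlt (a + 1) (b + 1) (by omega) (by omega)).ne'
      · exact absurd hab (hlt (b + 1) (a + 1) (by omega) (by omega)).ne
    exact Set.infinite_of_injective_forall_mem hinj fun k =>
      ⟨(hatom _).2 ⟨k + 1, by omega, gdef _⟩, hdiv (k + 1) (by omega)⟩
  refine ⟨hatom, h1G, harb, hinf, ?_, ?_⟩
  · intro hB
    obtain ⟨-, hfin⟩ := hB 1 h1G
    obtain ⟨B, hB'⟩ := hfin.bddAbove
    obtain ⟨s, hs, hcard⟩ := harb (B + 1)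
    have hmem : Multiset.card s ∈ Multiset.card '' FactorizationsIn G 1 := ⟨s, hs, rfl⟩
    have := hB' hmem
    omega
  · intro hI
    exact hinf (hI 1 h1G)
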